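/- The series sum over k≥1 of 1/(α^(2k)·(2k-1)(2k)(2k+1)) equals (1/2)((3√5/2)ln(α) - ln(α) - 1), where α = (1+√5)/2 is the golden ratio. -/

import Mathlib

theorem stmt_15 :
    ∑' k : ℕ,
        1 / (((1 + Real.sqrt 5) / 2) ^ (2 * k + 2) * (2 * (k : ℝ) + 1) * (2 * k + 2) * (2 * k + 3)) =
      (1 / 2) * ((3 * Real.sqrt 5 / 2) * Real.log ((1 + Real.sqrt 5) / 2)
        - Real.log ((1 + Real.sqrt 5) / 2) - 1) := by
  set s : ℝ := Real.sqrt 5 with hs_def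
  have hs5 : s ^ 2 = 5 := Real.sq_sqrt (by norm_num)
  have hs0 : 0 ≤ s := Real.sqrt_nonneg 5
  have h2s : 2 < s := by nlinarith
  have hs3 : s < 3 := by nlinarith
  set a : ℝ := (1 + s) / 2 with ha_def
  set t : ℝ := (s - 1) / 2 with ht_def
  have ht0 : 0 < t := by rw [ht_def]; linarith
  have ht1 : t < 1 := by rw [ht_def]; linarith
  have ha0 : 0 < a := by rw [ha_def]; linarith
  have hta : t * a = 1 := by rw [ht_def, ha_def]; nlinarith
  have hainv : a = t⁻¹ := by field_simp at hta ⊢; linarith [hta]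
  have habs : |t| < 1 := abs_lt.mpr ⟨by linarith, ht1⟩
  have habs2 : |t ^ 2| < 1 := by
    rw [abs_of_nonneg (by positivity)]; nlinarith
  -- log values
  have h1t : 1 - t = (a ^ 2)⁻¹ := by
    refine eq_inv_of_mul_eq_one_left ?_
    rw [ht_def, ha_def]; nlinarith
  have hlog1t : Real.log (1 - t) = -(2 * Real.log a) := by
    rw [h1t, Real.log_inv, Real.log_pow]; push_cast; ring
  have h1t2 : 1 - t ^ 2 = a⁻¹ := by
    refine eq_inv_of_mul_eq_one_left ?_
    rw [ht_def, ha_def]; nlinarith [hs5]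
  have hlog1t2 : Real.log (1 - t ^ 2) = -Real.log a := by
    rw [h1t2, Real.log_inv]
  set f : ℕ → ℝ := fun n => t ^ (n + 1) / (n + 1) with hf_def
  have hf : HasSum f (-Real.log (1 - t)) :=
    Real.hasSum_pow_div_log_of_abs_lt_one habs
  have hg : HasSum (fun n : ℕ => (t ^ 2) ^ (n + 1) / (n + 1)) (-Real.log (1 - t ^ 2)) :=
    Real.hasSum_pow_div_log_of_abs_lt_one habs2
  -- odd part
  have hodd : HasSum (fun k => f (2 * k + 1)) (Real.log a / 2) := by
    have h := hg.mul_left (1 / 2)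
    rw [hlog1t2] at h
    have : (fun k : ℕ => f (2 * k + 1)) = fun k : ℕ => 1 / 2 * ((t ^ 2) ^ (k + 1) / (k + 1)) := by
      funext k
      rw [hf_def]
      have hk1 : ((k : ℝ) + 1) ≠ 0 := by positivity
      push_cast
      rw [← pow_mul]
      field_simp
      ring
    rw [this]
    rw [show Real.log a / 2 = 1 / 2 * - -Real.log a by ring]
    exact h
  -- even part
  have hesum : Summable fun k => f (2 * k) :=
    hf.summable.comp_injective (fun m n h => by omega)
  obtain ⟨A, hA⟩ := hesum
  have hsplit : HasSum f (A + Real.log a / 2) := hA.even_add_odd hodd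
  have hAval : A = 3 / 2 * Real.log a := by
    have := hsplit.unique hf
    rw [hlog1t] at this
    linarith
  rw [hAval] at hA
  -- shifted even part
  have hC : HasSum (fun k => f (2 * (k + 1))) (3 / 2 * Real.log a - t) := by
    have h0 : ∑ i ∈ Finset.range 1, f (2 * i) = t := by
      simp [hf_def]
    have := (hasSum_nat_add_iff' (f := fun k => f (2 * k)) 1).mpr hA
    rw [h0] at this
    exact this
  -- combine
  have h1 := hA.mul_left (t / 2)
  have h3 := hC.mul_left (1 / (2 * t))
  have hTot := (h1.sub hodd).add h3
  have hfun : (fun k : ℕ => t / 2 * f (2 * k) - f (2 * k + 1) + 1 / (2 * t) * f (2 * (k + 1)))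
      = fun k : ℕ =>
        1 / (a ^ (2 * k + 2) * (2 * (k : ℝ) + 1) * (2 * k + 2) * (2 * k + 3)) := by
    funext k
    rw [hf_def]
    have hap : a ^ (2 * k + 2) = (t ^ (2 * k + 2))⁻¹ := by
      rw [hainv, inv_pow]
    rw [hap]
    have htk : (0:ℝ) < t ^ (2 * k + 2) := by positivity
    have c1 : (0:ℝ) < 2 * (k:ℝ) + 1 := by positivity
    have c2 : (0:ℝ) < 2 * (k:ℝ) + 2 := by positivity
    have c3 : (0:ℝ) < 2 * (k:ℝ) + 3 := by positivity
    push_cast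
    field_simp
    ring
  rw [hfun] at hTot
  rw [hTot.tsum_eq]
  rw [hainv]
  have ht0' : t ≠ 0 := ne_of_gt ht0
  have hst : s = t + t⁻¹ := by
    rw [← hainv]; rw [ht_def, ha_def]; ring
  rw [hst]
  field_simp
  ring
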